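/- Let K be an infinite field and let S ⊆ Y = P^{n_1} × ... × P^{n_k} be a nonempty finite linearly independent set. Suppose there is an index i ∈ {1,...,k} such that π_i(S) does not span P^{n_i}. Then S admits a linearly independent elementary increasing in the i-th direction: there exist o ∈ S and distinct points o', o'' ∈ Y such that π_j(o') = π_j(o'') = π_j(o) for all j ≠ i, the three points π_i(o), π_i(o'), π_i(o'') are pairwise distinct and lie on a common projective line in P^{n_i}, and the set (S \ {o}) ∪ {o', o''} (of cardinality #S + 1) is linearly independent. -/

import Mathlib

open scoped LinearAlgebra.Projectivization
open Projectivization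

/-- The multiprojective space `Y = P^{n 0} × ... × P^{n (k-1)}` over `K`,
where `P^m = P(K^{m+1})`. -/
abbrev MultiProj (K : Type*) [Field K] {k : ℕ} (n : Fin k → ℕ) :=
  ∀ i : Fin k, ℙ K (Fin (n i + 1) → K)

/-- A vector representative of the Segre image `ν(x)` of a point `x ∈ Y`:
the tensor product of representatives of the coordinates. -/
noncomputable def segreVec {K : Type*} [Field K] {k : ℕ} {n : Fin k → ℕ}
    (x : MultiProj K n) : PiTensorProduct K (fun i : Fin k => Fin (n i + 1) → K) :=
  PiTensorProduct.tprod K (fun i => (x i).rep)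

/-- `e(S) = #S − 1 − dim⟨ν(S)⟩`, computed as `#S` minus the rank of the linear span
of vector representatives of `ν(S)`. -/
noncomputable def eSet {K : Type*} [Field K] {k : ℕ} {n : Fin k → ℕ}
    (S : Set (MultiProj K n)) : ℕ :=
  S.ncard - Module.finrank K ↥(Submodule.span K (segreVec '' S))

/-- `S ⊆ Y` is nondegenerate: `π i '' S` spans `P^{n i}` for every `i`. -/
def Nondeg {K : Type*} [Field K] {k : ℕ} {n : Fin k → ℕ}
    (S : Set (MultiProj K n)) : Prop :=
  ∀ i : Fin k, Submodule.span K ((fun x => (x i).rep) '' S) = ⊤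

/-- For products of `P^1`'s: `S` is nondegenerate iff each projection has ≥ 2 points. -/
def NondegPts {K : Type*} [Field K] {k : ℕ} {n : Fin k → ℕ}
    (S : Set (MultiProj K n)) : Prop :=
  ∀ i : Fin k, ∃ p ∈ S, ∃ q ∈ S, p i ≠ q i

/-- `S` is a circuit: linearly dependent, but every proper subset is linearly independent. -/
def IsCircuit {K : Type*} [Field K] {k : ℕ} {n : Fin k → ℕ}
    (S : Set (MultiProj K n)) : Prop :=
  0 < eSet S ∧ ∀ S' : Set (MultiProj K n), S' ⊂ S → eSet S' = 0

/-- `q ∈ P^r` equals `ν(s)` for the point `s ∈ Y`. -/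
def IsSegreOf {K : Type*} [Field K] {k : ℕ} {n : Fin k → ℕ}
    (q : ℙ K (PiTensorProduct K (fun i : Fin k => Fin (n i + 1) → K)))
    (s : MultiProj K n) : Prop :=
  ∃ c : K, q.rep = c • segreVec s

/-- `q ∈ P^r` lies on the Segre variety `ν(Y)`. -/
def InSegre {K : Type*} [Field K] {k : ℕ} {n : Fin k → ℕ}
    (q : ℙ K (PiTensorProduct K (fun i : Fin k => Fin (n i + 1) → K))) : Prop :=
  ∃ y : MultiProj K n, IsSegreOf q y

/-- `S` is minimal: there is no projective line `L ⊆ P^r` contained in the Segre variety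
`ν(Y)` meeting `ν(S)` in at least two points. -/
def IsMinimal {K : Type*} [Field K] {k : ℕ} {n : Fin k → ℕ}
    (S : Set (MultiProj K n)) : Prop :=
  ¬ ∃ W : Submodule K (PiTensorProduct K (fun i : Fin k => Fin (n i + 1) → K)),
      Module.finrank K ↥W = 2 ∧
      (∀ x : ℙ K (PiTensorProduct K (fun i : Fin k => Fin (n i + 1) → K)),
        x.rep ∈ W → InSegre x) ∧
      ∃ x₁ x₂ : ℙ K (PiTensorProduct K (fun i : Fin k => Fin (n i + 1) → K)),
        x₁ ≠ x₂ ∧ x₁.rep ∈ W ∧ x₂.rep ∈ W ∧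
        (∃ s₁ ∈ S, IsSegreOf x₁ s₁) ∧ (∃ s₂ ∈ S, IsSegreOf x₂ s₂)

/-- The `X`-rank of a point `q ∈ P^r`: the minimal cardinality of a finite `A ⊆ Y`
with `q ∈ ⟨ν(A)⟩`. -/
noncomputable def xRank {K : Type*} [Field K] {k : ℕ} {n : Fin k → ℕ}
    (q : ℙ K (PiTensorProduct K (fun i : Fin k => Fin (n i + 1) → K))) : ℕ :=
  sInf {m : ℕ | ∃ A : Set (MultiProj K n), A.Finite ∧ A.ncard = m ∧
    q.rep ∈ Submodule.span K (segreVec '' A)}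

private lemma exists_dual_one' {K V : Type*} [Field K] [AddCommGroup V] [Module K V]
    {x : V} (hx : x ≠ 0) : ∃ φ : V →ₗ[K] K, φ x = 1 := by
  have h : ¬ ∀ φ : Module.Dual K V, φ x = 0 := by
    rw [Module.forall_dual_apply_eq_zero_iff K x]; exact hx
  push_neg at h
  obtain ⟨φ, hφ⟩ := h
  exact ⟨(φ x)⁻¹ • φ, by simp [inv_mul_cancel₀ hφ]⟩

private lemma exists_dual_annihilator' {K V : Type*} [Field K] [AddCommGroup V] [Module K V]
    {U : Submodule K V} {x : V} (hx : x ∉ U) :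
    ∃ φ : V →ₗ[K] K, φ x = 1 ∧ ∀ u ∈ U, φ u = 0 := by
  have h0 : (U.mkQ x : V ⧸ U) ≠ 0 := by
    intro h
    exact hx ((Submodule.Quotient.mk_eq_zero U).mp h)
  obtain ⟨ψ, hψ⟩ := exists_dual_one' (K := K) h0
  refine ⟨ψ ∘ₗ U.mkQ, hψ, fun u hu => ?_⟩
  have : U.mkQ u = 0 := (Submodule.Quotient.mk_eq_zero U).mpr hu
  simp [this]

private lemma tprod_ne_zero' {K : Type*} [Field K] {ι : Type*} [Fintype ι]
    {V : ι → Type*} [∀ i, AddCommGroup (V i)] [∀ i, Module K (V i)]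
    {f : ∀ i, V i} (hf : ∀ i, f i ≠ 0) :
    PiTensorProduct.tprod K f ≠ 0 := by
  have h : ∀ i, ∃ φ : V i →ₗ[K] K, φ (f i) = 1 := fun i => exists_dual_one' (hf i)
  choose φ hφ using h
  intro h0
  have := congrArg (PiTensorProduct.lift ((MultilinearMap.mkPiAlgebra K ι K).compLinearMap φ)) h0
  simp only [PiTensorProduct.lift.tprod, MultilinearMap.compLinearMap_apply,
    MultilinearMap.mkPiAlgebra_apply, hφ, Finset.prod_const_one, map_zero] at this
  exact one_ne_zero this

set_option maxHeartbeats 1600000 in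
theorem exists_linearly_independent_elementary_increasing
    {K : Type*} [Field K] [Infinite K] {k : ℕ} {n : Fin k → ℕ}
    (hk : 0 < k) (hn : ∀ i, 0 < n i)
    (S : Set (MultiProj K n)) (hSfin : S.Finite) (hSne : S.Nonempty)
    (hind : eSet S = 0) (i : Fin k)
    (hnospan : Submodule.span K ((fun x => (x i).rep) '' S) ≠ ⊤) :
    ∃ o ∈ S, ∃ o' o'' : MultiProj K n,
      o' ≠ o'' ∧
      (∀ j, j ≠ i → o' j = o j ∧ o'' j = o j) ∧
      o i ≠ o' i ∧ o i ≠ o'' i ∧ o' i ≠ o'' i ∧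
      (∃ W : Submodule K (Fin (n i + 1) → K), Module.finrank K ↥W = 2 ∧
        (o i).rep ∈ W ∧ (o' i).rep ∈ W ∧ (o'' i).rep ∈ W) ∧
      ((S \ {o}) ∪ {o', o''}).ncard = S.ncard + 1 ∧
      eSet ((S \ {o}) ∪ {o', o''}) = 0 := by
  classical
  obtain ⟨o, ho⟩ := hSne
  set U : Submodule K (Fin (n i + 1) → K) :=
    Submodule.span K ((fun x => (x i).rep) '' S) with hUdef
  obtain ⟨v, hvU⟩ : ∃ v, v ∉ U := by
    by_contra h
    push_neg at h
    exact hnospan (Submodule.eq_top_iff'.mpr h)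
  obtain ⟨φ, hφv, hφU⟩ := exists_dual_annihilator' (K := K) hvU
  set u : Fin (n i + 1) → K := (o i).rep with hudef
  have huU : u ∈ U := Submodule.subset_span ⟨o, ho, rfl⟩
  have hu0 : u ≠ 0 := (o i).rep_nonzero
  have hv0 : v ≠ 0 := fun h => hvU (h ▸ U.zero_mem)
  have huv0 : u + v ≠ 0 := by
    intro h
    have : v = -u := eq_neg_of_add_eq_zero_right h
    exact hvU (this ▸ U.neg_mem huU)
  have hsmul_mem : ∀ (b : Kˣ) (w : Fin (n i + 1) → K), (b : K) • w ∈ U → w ∈ U := by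
    intro b w hw
    have := U.smul_mem ((b : K)⁻¹) hw
    rwa [smul_smul, inv_mul_cancel₀ (Units.ne_zero b), one_smul] at this
  set o' : MultiProj K n := Function.update o i (Projectivization.mk K v hv0) with ho'def
  set o'' : MultiProj K n := Function.update o i (Projectivization.mk K (u + v) huv0) with ho''def
  have ho'i : o' i = Projectivization.mk K v hv0 := Function.update_self i _ o
  have ho''i : o'' i = Projectivization.mk K (u + v) huv0 := Function.update_self i _ o
  obtain ⟨a, ha⟩ := Projectivization.exists_smul_eq_mk_rep K v hv0
  obtain ⟨c, hc⟩ := Projectivization.exists_smul_eq_mk_rep K (u + v) huv0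
  set rO : ∀ j : Fin k, Fin (n j + 1) → K := fun j => (o j).rep with hrOdef
  set T : (Fin (n i + 1) → K) → PiTensorProduct K (fun j : Fin k => Fin (n j + 1) → K) :=
    fun w => PiTensorProduct.tprod K (Function.update rO i w) with hTdef
  have hTu : T u = segreVec o := by
    have h1 : Function.update rO i u = rO := Function.update_eq_self i rO
    show PiTensorProduct.tprod K (Function.update rO i u) = segreVec o
    rw [h1]; rfl
  have hrep' : (fun j => (o' j).rep) = Function.update rO i ((Projectivization.mk K v hv0).rep) := by
    funext j
    by_cases hji : j = i
    · subst hji; rw [ho'i, Function.update_self]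
    · rw [ho'def, Function.update_of_ne hji, Function.update_of_ne hji]
  have hrep'' : (fun j => (o'' j).rep)
      = Function.update rO i ((Projectivization.mk K (u + v) huv0).rep) := by
    funext j
    by_cases hji : j = i
    · subst hji; rw [ho''i, Function.update_self]
    · rw [ho''def, Function.update_of_ne hji, Function.update_of_ne hji]
  have hseg' : segreVec o' = (a : K) • T v := by
    simp only [segreVec, hrep', ← ha, Units.smul_def]
    exact MultilinearMap.map_update_smul (PiTensorProduct.tprod K) rO i (a : K) v
  have hseg'' : segreVec o'' = (c : K) • (segreVec o + T v) := by
    simp only [segreVec, hrep'', ← hc, Units.smul_def]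
    have h1 : Function.update rO i u = rO := Function.update_eq_self i rO
    rw [MultilinearMap.map_update_smul (PiTensorProduct.tprod K) rO i (c : K) (u + v),
      MultilinearMap.map_update_add (PiTensorProduct.tprod K) rO i u v, h1]
  -- the contraction map
  set L : ∀ j : Fin k, (Fin (n j + 1) → K) →ₗ[K] (Fin (n j + 1) → K) :=
    Function.update (fun j => (LinearMap.id : (Fin (n j + 1) → K) →ₗ[K] (Fin (n j + 1) → K))) i
      (φ.smulRight v) with hLdef
  set Λ := PiTensorProduct.lift
    ((PiTensorProduct.tprod K (s := fun j : Fin k => Fin (n j + 1) → K)).compLinearMap L) with hΛdef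
  have hΛ : ∀ w : ∀ j : Fin k, Fin (n j + 1) → K,
      Λ (PiTensorProduct.tprod K w) = PiTensorProduct.tprod K (fun j => L j (w j)) := by
    intro w
    rw [hΛdef, PiTensorProduct.lift.tprod, MultilinearMap.compLinearMap_apply]
  have hLi : L i = φ.smulRight v := Function.update_self i _ _
  have hΛS : ∀ x ∈ S, Λ (segreVec x) = 0 := by
    intro x hx
    simp only [segreVec]
    rw [hΛ]
    refine MultilinearMap.map_coord_zero _ i ?_
    rw [hLi]
    have : φ ((x i).rep) = 0 := hφU _ (Submodule.subset_span ⟨x, hx, rfl⟩)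
    simp [this]
  have hΛTv : Λ (T v) = T v := by
    rw [hTdef]
    rw [hΛ]
    congr 1
    funext j
    by_cases hji : j = i
    · subst hji
      rw [Function.update_self, hLi]
      simp [hφv]
    · rw [Function.update_of_ne hji, hLdef, Function.update_of_ne hji]
      rfl
  have hTv0 : T v ≠ 0 := by
    refine tprod_ne_zero' ?_
    intro j
    by_cases hji : j = i
    · subst hji; rw [Function.update_self]; exact hv0
    · rw [Function.update_of_ne hji]; exact (o j).rep_nonzero
  have hTvspan : T v ∉ Submodule.span K (segreVec '' S) := by
    intro hmem
    have hle : Submodule.span K (segreVec '' S) ≤ LinearMap.ker Λ := by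
      rw [Submodule.span_le]
      rintro _ ⟨x, hx, rfl⟩
      exact LinearMap.mem_ker.mpr (hΛS x hx)
    have h0 : Λ (T v) = 0 := LinearMap.mem_ker.mp (hle hmem)
    rw [hΛTv] at h0
    exact hTv0 h0
  -- the new points are not in S
  have ho'S : o' ∉ S := by
    intro h
    have h1 : (o' i).rep ∈ U := Submodule.subset_span ⟨o', h, rfl⟩
    rw [ho'i, ← ha, Units.smul_def] at h1
    exact hvU (hsmul_mem a v h1)
  have ho''S : o'' ∉ S := by
    intro h
    have h1 : (o'' i).rep ∈ U := Submodule.subset_span ⟨o'', h, rfl⟩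
    rw [ho''i, ← hc, Units.smul_def] at h1
    have h2 : u + v ∈ U := hsmul_mem c _ h1
    have : v = (u + v) - u := by abel
    exact hvU (this ▸ U.sub_mem h2 huU)
  -- pairwise distinctness of the i-th coordinates
  have hoi : o i = Projectivization.mk K u hu0 := (Projectivization.mk_rep (o i)).symm
  have hne1 : o i ≠ o' i := by
    intro heq
    rw [hoi, ho'i, Projectivization.mk_eq_mk_iff] at heq
    obtain ⟨b, hb⟩ := heq
    have : v = (b : K)⁻¹ • u := by
      rw [← hb, Units.smul_def, smul_smul, inv_mul_cancel₀ (Units.ne_zero b), one_smul]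
    exact hvU (this ▸ U.smul_mem _ huU)
  have hne2 : o i ≠ o'' i := by
    intro heq
    rw [hoi, ho''i, Projectivization.mk_eq_mk_iff] at heq
    obtain ⟨b, hb⟩ := heq
    rw [Units.smul_def, smul_add] at hb
    have h2 : (b : K) • v = u - (b : K) • u := eq_sub_of_add_eq' hb
    have h3 : (b : K) • v ∈ U := h2 ▸ U.sub_mem huU (U.smul_mem _ huU)
    exact hvU (hsmul_mem b v h3)
  have hne3 : o' i ≠ o'' i := by
    intro heq
    rw [ho'i, ho''i, Projectivization.mk_eq_mk_iff] at heq
    obtain ⟨b, hb⟩ := heq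
    rw [Units.smul_def, smul_add] at hb
    have h2 : (b : K) • u = v - (b : K) • v := eq_sub_of_add_eq hb
    by_cases hb1 : (1 : K) - (b : K) = 0
    · have hbv : (b : K) • v = v := by
        have h1b : (1 : K) = (b : K) := sub_eq_zero.mp hb1
        rw [← h1b, one_smul]
      rw [hbv, sub_self] at h2
      have : u = 0 := by
        have := smul_eq_zero.mp h2
        rcases this with h | h
        · exact absurd h (Units.ne_zero b)
        · exact h
      exact hu0 this
    · have h4 : v - (b : K) • v = ((1 : K) - (b : K)) • v := by
        rw [sub_smul, one_smul]
      rw [h4] at h2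
      have h5 : v = ((1 : K) - (b : K))⁻¹ • ((b : K) • u) := by
        rw [h2, smul_smul, inv_mul_cancel₀ hb1, one_smul]
      exact hvU (h5 ▸ U.smul_mem _ (U.smul_mem _ huU))
  have ho'o'' : o' ≠ o'' := fun h => hne3 (by rw [h])
  -- the 2-dimensional subspace W
  have hW : ∃ W : Submodule K (Fin (n i + 1) → K), Module.finrank K ↥W = 2 ∧
      (o i).rep ∈ W ∧ (o' i).rep ∈ W ∧ (o'' i).rep ∈ W := by
    refine ⟨Submodule.span K {u, v}, ?_, ?_, ?_, ?_⟩
    · have hli : LinearIndependent K ![u, v] := by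
        rw [linearIndependent_fin2]
        constructor
        · simpa using hv0
        · intro t ht
          simp only [Matrix.cons_val_one, Matrix.head_cons, Matrix.cons_val_zero] at ht
          by_cases ht0 : t = 0
          · rw [ht0, zero_smul] at ht; exact hu0 ht.symm
          · have : v = t⁻¹ • u := by rw [← ht, smul_smul, inv_mul_cancel₀ ht0, one_smul]
            exact hvU (this ▸ U.smul_mem _ huU)
      have hrange : Set.range ![u, v] = {u, v} := by
        simp [Matrix.range_cons, Matrix.range_empty, Set.pair_comm]
      rw [← hrange, finrank_span_eq_card hli]
      simp
    · exact Submodule.subset_span (Set.mem_insert _ _)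
    · rw [ho'i, ← ha, Units.smul_def]
      exact Submodule.smul_mem _ _
        (Submodule.subset_span (Set.mem_insert_of_mem _ rfl))
    · rw [ho''i, ← hc, Units.smul_def]
      exact Submodule.smul_mem _ _
        (Submodule.add_mem _ (Submodule.subset_span (Set.mem_insert _ _))
          (Submodule.subset_span (Set.mem_insert_of_mem _ rfl)))
  -- cardinality
  have hdisj : Disjoint (S \ {o}) ({o', o''} : Set (MultiProj K n)) := by
    rw [Set.disjoint_left]
    rintro x ⟨hxS, _⟩ hx2
    rcases hx2 with h | h
    · exact ho'S (h ▸ hxS)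
    · exact ho''S ((Set.mem_singleton_iff.mp h) ▸ hxS)
  have hncard : ((S \ {o}) ∪ {o', o''}).ncard = S.ncard + 1 := by
    rw [Set.ncard_union_eq hdisj (hSfin.diff (t := {o})) (Set.toFinite _), Set.ncard_pair ho'o'']
    have h1 := Set.ncard_diff_singleton_add_one ho hSfin
    omega
  -- linear independence of the new set
  have hS'fin : ((S \ {o}) ∪ {o', o''} : Set (MultiProj K n)).Finite :=
    (hSfin.diff (t := {o})).union (Set.toFinite _)
  haveI hfd1 : FiniteDimensional K (Submodule.span K (segreVec '' S)) :=
    FiniteDimensional.span_of_finite K (hSfin.image _)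
  haveI hfd2 : FiniteDimensional K
      (Submodule.span K (segreVec '' ((S \ {o}) ∪ {o', o''}))) :=
    FiniteDimensional.span_of_finite K (hS'fin.image _)
  have hTvmem : T v ∈ Submodule.span K (segreVec '' ((S \ {o}) ∪ {o', o''})) := by
    have h1 : segreVec o' ∈ Submodule.span K (segreVec '' ((S \ {o}) ∪ {o', o''})) :=
      Submodule.subset_span ⟨o', Or.inr (Set.mem_insert _ _), rfl⟩
    have hTva : T v = (a : K)⁻¹ • segreVec o' := by
      rw [hseg', smul_smul, inv_mul_cancel₀ (Units.ne_zero a), one_smul]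
    rw [hTva]
    exact Submodule.smul_mem _ _ h1
  have hsub : Submodule.span K (segreVec '' S) ⊔ (K ∙ T v)
      ≤ Submodule.span K (segreVec '' ((S \ {o}) ∪ {o', o''})) := by
    apply sup_le
    · rw [Submodule.span_le]
      rintro _ ⟨x, hx, rfl⟩
      by_cases hxo : x = o
      · rw [hxo]
        have h2 : segreVec o'' ∈ Submodule.span K (segreVec '' ((S \ {o}) ∪ {o', o''})) :=
          Submodule.subset_span ⟨o'', Or.inr (Set.mem_insert_of_mem _ rfl), rfl⟩
        have hxeq : segreVec o = (c : K)⁻¹ • segreVec o'' - T v := by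
          rw [hseg'', smul_smul, inv_mul_cancel₀ (Units.ne_zero c), one_smul,
            add_sub_cancel_right]
        rw [hxeq]
        exact Submodule.sub_mem _ (Submodule.smul_mem _ _ h2) hTvmem
      · exact Submodule.subset_span ⟨x, Or.inl ⟨hx, hxo⟩, rfl⟩
    · rw [Submodule.span_singleton_le_iff_mem]
      exact hTvmem
  have hinf : Submodule.span K (segreVec '' S) ⊓ (K ∙ T v) = ⊥ := by
    rw [eq_bot_iff]
    rintro x hx
    obtain ⟨hx1, hx2⟩ := Submodule.mem_inf.mp hx
    obtain ⟨t, rfl⟩ := Submodule.mem_span_singleton.mp hx2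
    by_cases ht : t = 0
    · rw [ht, zero_smul]; exact Submodule.zero_mem _
    · exfalso
      apply hTvspan
      have := Submodule.smul_mem _ t⁻¹ hx1
      rwa [smul_smul, inv_mul_cancel₀ ht, one_smul] at this
  have hrank : Module.finrank K ↥(Submodule.span K (segreVec '' S) ⊔ (K ∙ T v))
      = Module.finrank K ↥(Submodule.span K (segreVec '' S)) + 1 := by
    have h := Submodule.finrank_sup_add_finrank_inf_eq
      (Submodule.span K (segreVec '' S)) (K ∙ T v)
    rw [hinf, finrank_bot, finrank_span_singleton hTv0] at h
    omega
  have hSle : S.ncard ≤ Module.finrank K ↥(Submodule.span K (segreVec '' S)) := by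
    have := hind
    unfold eSet at this
    omega
  have hfinal : S.ncard + 1
      ≤ Module.finrank K ↥(Submodule.span K (segreVec '' ((S \ {o}) ∪ {o', o''}))) := by
    have h1 := Submodule.finrank_mono hsub
    omega
  refine ⟨o, ho, o', o'', ho'o'', ?_, hne1, hne2, hne3, hW, hncard, ?_⟩
  · intro j hj
    exact ⟨Function.update_of_ne hj _ _, Function.update_of_ne hj _ _⟩
  · unfold eSet
    rw [hncard]
    omega
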